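/- Let a ∈ ℝ and let I be an interval with least element a, nonempty interior, and I ⊂ [a,∞). If α > 0 and q : I → ℝ is locally essentially bounded on I, then I^α_{a+}[q] (everywhere defined by the integral formula) is locally Hölder continuous of exponent min(α,1) and vanishes at a: for every compact subinterval [a,b] ⊂ I there exists C ≥ 0 such that |I^α_{a+}[q](t₂) − I^α_{a+}[q](t₁)| ≤ C·|t₂ − t₁|^{min(α,1)} for all t₁, t₂ ∈ [a,b], and I^α_{a+}[q](a) = 0. -/

import Mathlib

open MeasureTheory Set

/-- Left Riemann–Liouville fractional integral of order `α` with base point `a`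
(for `α = 0` it is the identity). -/
noncomputable def rlInt (a α : ℝ) (q : ℝ → ℝ) (t : ℝ) : ℝ :=
  if α = 0 then q t else (1 / Real.Gamma α) * ∫ τ in a..t, (t - τ) ^ (α - 1) * q τ

/-- `q` is locally essentially bounded on the interval `I` with least element `a`:
it is (measurable and) essentially bounded on every compact subinterval `[a, b] ⊆ I`. -/
def LocEssBddOn (a : ℝ) (I : Set ℝ) (q : ℝ → ℝ) : Prop :=
  ∀ b ∈ I,
    MeasureTheory.AEStronglyMeasurable q (MeasureTheory.volume.restrict (Set.Icc a b)) ∧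
    ∃ M : ℝ, ∀ᵐ t ∂(MeasureTheory.volume.restrict (Set.Icc a b)), |q t| ≤ M

lemma rl_kernel_intable {α : ℝ} (hα : 0 < α) (t c d : ℝ) :
    IntervalIntegrable (fun τ => (t - τ) ^ (α - 1)) volume c d := by
  have h := (intervalIntegral.intervalIntegrable_rpow' (a := t - c) (b := t - d)
      (r := α - 1) (by linarith)).comp_sub_left t
  simpa using h

lemma rl_kernel_integral {α : ℝ} (hα : 0 < α) (c d t : ℝ) :
    ∫ τ in c..d, (t - τ) ^ (α - 1) = ((t - c) ^ α - (t - d) ^ α) / α := by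
  rw [intervalIntegral.integral_comp_sub_left (fun s => s ^ (α - 1)) t,
    integral_rpow (Or.inl (by linarith : (-1:ℝ) < α - 1))]
  have h : α - 1 + 1 = α := by ring
  rw [h]

lemma rl_rpow_sub_rpow_le {α B x y : ℝ} (hα : 1 ≤ α) (hy : 0 ≤ y) (hxy : y ≤ x) (hB : x ≤ B) :
    x ^ α - y ^ α ≤ α * B ^ (α - 1) * (x - y) := by
  have hα0 : (0:ℝ) < α := by linarith
  have hint : ∫ s in y..x, s ^ (α - 1) = (x ^ α - y ^ α) / α := by
    rw [integral_rpow (Or.inl (by linarith : (-1:ℝ) < α - 1))]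
    have h : α - 1 + 1 = α := by ring
    rw [h]
  have hbd : ‖∫ s in y..x, s ^ (α - 1)‖ ≤ B ^ (α - 1) * |x - y| := by
    apply intervalIntegral.norm_integral_le_of_norm_le_const
    intro s hs
    rw [Set.uIoc_of_le hxy] at hs
    rw [Real.norm_eq_abs, abs_of_nonneg (Real.rpow_nonneg (le_trans hy hs.1.le) _)]
    exact Real.rpow_le_rpow (le_trans hy hs.1.le) (hs.2.trans hB) (by linarith)
  rw [hint, Real.norm_eq_abs, abs_of_nonneg (sub_nonneg.2 hxy)] at hbd
  have h3 : (x ^ α - y ^ α) / α ≤ B ^ (α - 1) * (x - y) := (le_abs_self _).trans hbd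
  calc x ^ α - y ^ α = α * ((x ^ α - y ^ α) / α) := by field_simp
    _ ≤ α * (B ^ (α - 1) * (x - y)) := mul_le_mul_of_nonneg_left h3 hα0.le
    _ = α * B ^ (α - 1) * (x - y) := by ring

lemma rl_prod_intable {q : ℝ → ℝ} {α : ℝ} (hα : 0 < α) {a b t M : ℝ}
    (hmeas : AEStronglyMeasurable q (volume.restrict (Set.Icc a b)))
    (hM : ∀ᵐ τ ∂(volume.restrict (Set.Icc a b)), |q τ| ≤ M)
    {c d : ℝ} (hac : a ≤ c) (hcd : c ≤ d) (hdt : d ≤ t) (htb : t ≤ b) :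
    IntervalIntegrable (fun τ => (t - τ) ^ (α - 1) * q τ) volume c d := by
  rw [intervalIntegrable_iff_integrableOn_Ioc_of_le hcd]
  have hsub : Set.Ioc c d ⊆ Set.Icc a b := fun x hx =>
    ⟨le_trans hac hx.1.le, le_trans hx.2 (le_trans hdt htb)⟩
  have hmeas' : AEStronglyMeasurable q (volume.restrict (Set.Ioc c d)) :=
    hmeas.mono_measure (Measure.restrict_mono hsub le_rfl)
  have hM' : ∀ᵐ τ ∂(volume.restrict (Set.Ioc c d)), |q τ| ≤ M :=
    ae_restrict_of_ae_restrict_of_subset hsub hM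
  have hker : IntegrableOn (fun τ => |M| * (t - τ) ^ (α - 1)) (Set.Ioc c d) := by
    have h := ((rl_kernel_intable hα t c d).const_mul |M|)
    rw [intervalIntegrable_iff_integrableOn_Ioc_of_le hcd] at h
    exact h
  apply Integrable.mono' hker
  · exact (((measurable_const.sub measurable_id).pow measurable_const).aestronglyMeasurable).mul
      hmeas'
  · filter_upwards [hM', ae_restrict_mem measurableSet_Ioc] with τ hqτ hτ
    have hnn : (0:ℝ) ≤ (t - τ) ^ (α - 1) := Real.rpow_nonneg (by linarith [hτ.2]) _
    rw [Real.norm_eq_abs, abs_mul, abs_of_nonneg hnn]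
    calc (t - τ) ^ (α - 1) * |q τ| ≤ (t - τ) ^ (α - 1) * M :=
          mul_le_mul_of_nonneg_left hqτ hnn
      _ ≤ |M| * (t - τ) ^ (α - 1) := by
          rw [mul_comm]; exact mul_le_mul_of_nonneg_right (le_abs_self M) hnn

set_option maxHeartbeats 1000000 in
theorem statement1 (a : ℝ) (I : Set ℝ)
    (haI : a ∈ I) (hIsub : I ⊆ Set.Ici a) (hIint : (interior I).Nonempty)
    (hIord : I.OrdConnected)
    (α : ℝ) (hα : 0 < α) (q : ℝ → ℝ) (hq : LocEssBddOn a I q) :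
    (∀ b ∈ I, ∃ C : ℝ, 0 ≤ C ∧ ∀ t₁ ∈ Set.Icc a b, ∀ t₂ ∈ Set.Icc a b,
      |rlInt a α q t₂ - rlInt a α q t₁| ≤ C * |t₂ - t₁| ^ (min α 1)) ∧
    rlInt a α q a = 0 := by
  have hG : 0 < Real.Gamma α := Real.Gamma_pos_of_pos hα
  have hαne : α ≠ 0 := ne_of_gt hα
  constructor
  · intro b hb
    obtain ⟨hmeas, M0, hM0⟩ := hq b hb
    set M := |M0| with hMdef
    have hM : ∀ᵐ τ ∂(volume.restrict (Set.Icc a b)), |q τ| ≤ M :=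
      hM0.mono fun τ h => h.trans (le_abs_self M0)
    have hMnn : 0 ≤ M := abs_nonneg _
    have hab : a ≤ b := hIsub hb
    have hB0nn : (0:ℝ) ≤ (b - a) ^ (α - 1) := Real.rpow_nonneg (by linarith) _
    set C : ℝ := if α ≤ 1 then 2 * M / (Real.Gamma α * α)
      else 3 * M * (b - a) ^ (α - 1) / Real.Gamma α with hCdef
    have hCnn : 0 ≤ C := by
      rw [hCdef]; split
      · exact div_nonneg (by linarith) (by positivity)
      · exact div_nonneg (mul_nonneg (by linarith) hB0nn) hG.le
    refine ⟨C, hCnn, ?_⟩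
    have key : ∀ t₁ t₂, t₁ ∈ Set.Icc a b → t₂ ∈ Set.Icc a b → t₁ ≤ t₂ →
        |rlInt a α q t₂ - rlInt a α q t₁| ≤ C * (t₂ - t₁) ^ (min α 1) := by
      intro t₁ t₂ h1 h2 h12
      obtain ⟨ha1, h1b⟩ := h1
      obtain ⟨ha2, h2b⟩ := h2
      have hδnn : (0:ℝ) ≤ t₂ - t₁ := sub_nonneg.2 h12
      have hK1 : IntervalIntegrable (fun τ => (t₁ - τ) ^ (α - 1) * q τ) volume a t₁ :=
        rl_prod_intable hα hmeas hM le_rfl ha1 le_rfl h1b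
      have hK2 : IntervalIntegrable (fun τ => (t₂ - τ) ^ (α - 1) * q τ) volume a t₁ :=
        rl_prod_intable hα hmeas hM le_rfl ha1 h12 h2b
      have hK2' : IntervalIntegrable (fun τ => (t₂ - τ) ^ (α - 1) * q τ) volume t₁ t₂ :=
        rl_prod_intable hα hmeas hM ha1 h12 le_rfl h2b
      have hdecomp : rlInt a α q t₂ - rlInt a α q t₁ = (1 / Real.Gamma α) *
          ((∫ τ in a..t₁, ((t₂ - τ) ^ (α - 1) - (t₁ - τ) ^ (α - 1)) * q τ) +
            ∫ τ in t₁..t₂, (t₂ - τ) ^ (α - 1) * q τ) := by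
        simp only [rlInt, if_neg hαne]
        rw [show (fun τ => ((t₂ - τ) ^ (α - 1) - (t₁ - τ) ^ (α - 1)) * q τ)
            = (fun τ => (t₂ - τ) ^ (α - 1) * q τ - (t₁ - τ) ^ (α - 1) * q τ)
            from funext fun τ => by ring]
        rw [intervalIntegral.integral_sub hK2 hK1,
          ← intervalIntegral.integral_add_adjacent_intervals hK2 hK2']
        ring
      -- bound on the second integral
      have hBbound : |∫ τ in t₁..t₂, (t₂ - τ) ^ (α - 1) * q τ| ≤ M * ((t₂ - t₁) ^ α / α) := by
        have hb1 : IntervalIntegrable (fun τ => M * (t₂ - τ) ^ (α - 1)) volume t₁ t₂ :=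
          (rl_kernel_intable hα t₂ t₁ t₂).const_mul M
        have hsub : Set.Ioc t₁ t₂ ⊆ Set.Icc a b := fun x hx =>
          ⟨le_trans ha1 hx.1.le, le_trans hx.2 h2b⟩
        have hae : ∀ᵐ τ ∂(volume.restrict (Set.uIoc t₁ t₂)),
            ‖(t₂ - τ) ^ (α - 1) * q τ‖ ≤ M * (t₂ - τ) ^ (α - 1) := by
          rw [Set.uIoc_of_le h12]
          filter_upwards [ae_restrict_of_ae_restrict_of_subset hsub hM,
            ae_restrict_mem measurableSet_Ioc] with τ hqτ hτ
          have hnn : (0:ℝ) ≤ (t₂ - τ) ^ (α - 1) := Real.rpow_nonneg (by linarith [hτ.2]) _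
          rw [Real.norm_eq_abs, abs_mul, abs_of_nonneg hnn, mul_comm M]
          exact mul_le_mul_of_nonneg_left hqτ hnn
        have h := intervalIntegral.norm_integral_le_abs_of_norm_le hae hb1
        rw [intervalIntegral.integral_const_mul, rl_kernel_integral hα t₁ t₂ t₂,
          sub_self, Real.zero_rpow hαne, sub_zero] at h
        have hval : (0:ℝ) ≤ M * ((t₂ - t₁) ^ α / α) := by positivity
        rwa [Real.norm_eq_abs, abs_of_nonneg hval] at h
      rcases le_or_gt α 1 with hle | hgt
      · -- α ≤ 1 case
        have hmin : min α 1 = α := min_eq_left hle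
        have hCeq : C = 2 * M / (Real.Gamma α * α) := by rw [hCdef, if_pos hle]
        have hAbound : |∫ τ in a..t₁, ((t₂ - τ) ^ (α - 1) - (t₁ - τ) ^ (α - 1)) * q τ|
            ≤ M * ((t₂ - t₁) ^ α / α) := by
          have hg : IntervalIntegrable
              (fun τ => M * ((t₁ - τ) ^ (α - 1) - (t₂ - τ) ^ (α - 1))) volume a t₁ :=
            ((rl_kernel_intable hα t₁ a t₁).sub (rl_kernel_intable hα t₂ a t₁)).const_mul M
          have hne : ∀ᵐ τ : ℝ ∂volume, τ ≠ t₁ := by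
            rw [ae_iff]
            simpa using measure_singleton t₁
          have hsub : Set.Ioc a t₁ ⊆ Set.Icc a b := fun x hx =>
            ⟨hx.1.le, le_trans hx.2 h1b⟩
          have hkey : ∀ τ ∈ Set.Ioc a t₁, τ ≠ t₁ →
              (t₂ - τ) ^ (α - 1) ≤ (t₁ - τ) ^ (α - 1) := by
            intro τ hτ hτne
            have h0 : 0 < t₁ - τ := by
              rcases lt_or_eq_of_le hτ.2 with h | h
              · linarith
              · exact absurd h hτne
            exact Real.rpow_le_rpow_of_nonpos h0 (by linarith) (by linarith)
          have hae : ∀ᵐ τ ∂(volume.restrict (Set.uIoc a t₁)),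
              ‖((t₂ - τ) ^ (α - 1) - (t₁ - τ) ^ (α - 1)) * q τ‖
                ≤ M * ((t₁ - τ) ^ (α - 1) - (t₂ - τ) ^ (α - 1)) := by
            rw [Set.uIoc_of_le ha1]
            filter_upwards [ae_restrict_of_ae_restrict_of_subset hsub hM,
              ae_restrict_mem measurableSet_Ioc, ae_restrict_of_ae hne] with τ hqτ hτ hτne
            have hK := hkey τ hτ hτne
            rw [Real.norm_eq_abs, abs_mul, abs_of_nonpos (sub_nonpos.2 hK), neg_sub]
            calc ((t₁ - τ) ^ (α - 1) - (t₂ - τ) ^ (α - 1)) * |q τ|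
                ≤ ((t₁ - τ) ^ (α - 1) - (t₂ - τ) ^ (α - 1)) * M :=
                  mul_le_mul_of_nonneg_left hqτ (sub_nonneg.2 hK)
              _ = M * ((t₁ - τ) ^ (α - 1) - (t₂ - τ) ^ (α - 1)) := by ring
          have h := intervalIntegral.norm_integral_le_abs_of_norm_le hae hg
          have hval : ∫ τ in a..t₁, M * ((t₁ - τ) ^ (α - 1) - (t₂ - τ) ^ (α - 1))
              = M * ((((t₁ - a) ^ α - (t₁ - t₁) ^ α) / α)
                - (((t₂ - a) ^ α - (t₂ - t₁) ^ α) / α)) := by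
            rw [intervalIntegral.integral_const_mul,
              intervalIntegral.integral_sub (rl_kernel_intable hα t₁ a t₁)
                (rl_kernel_intable hα t₂ a t₁),
              rl_kernel_integral hα a t₁ t₁, rl_kernel_integral hα a t₁ t₂]
          have hgpos : 0 ≤ ∫ τ in a..t₁, M * ((t₁ - τ) ^ (α - 1) - (t₂ - τ) ^ (α - 1)) := by
            apply intervalIntegral.integral_nonneg_of_ae_restrict ha1
            have hsub2 : Set.Icc a t₁ ⊆ Set.Icc a b := fun x hx => ⟨hx.1, le_trans hx.2 h1b⟩
            filter_upwards [ae_restrict_mem measurableSet_Icc, ae_restrict_of_ae hne]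
              with τ hτ hτne
            have h0 : 0 < t₁ - τ := lt_of_le_of_ne (sub_nonneg.2 hτ.2) (fun h => hτne (by linarith))
            have hK : (t₂ - τ) ^ (α - 1) ≤ (t₁ - τ) ^ (α - 1) :=
              Real.rpow_le_rpow_of_nonpos h0 (by linarith) (by linarith)
            exact mul_nonneg hMnn (sub_nonneg.2 hK)
          rw [Real.norm_eq_abs, abs_of_nonneg hgpos, hval, sub_self,
            Real.zero_rpow hαne, sub_zero] at h
          have hmono : (t₁ - a) ^ α ≤ (t₂ - a) ^ α :=
            Real.rpow_le_rpow (by linarith) (by linarith) hα.le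
          calc |∫ τ in a..t₁, ((t₂ - τ) ^ (α - 1) - (t₁ - τ) ^ (α - 1)) * q τ|
              ≤ M * ((t₁ - a) ^ α / α - ((t₂ - a) ^ α - (t₂ - t₁) ^ α) / α) := h
            _ ≤ M * ((t₂ - t₁) ^ α / α) := by
                apply mul_le_mul_of_nonneg_left _ hMnn
                rw [div_sub_div_same]
                exact (div_le_div_iff_of_pos_right hα).mpr (by linarith [hmono])
        -- combine
        rw [hdecomp, hmin, abs_mul, abs_of_pos (by positivity : (0:ℝ) < 1 / Real.Gamma α)]
        calc (1 / Real.Gamma α) * |(∫ τ in a..t₁, ((t₂ - τ) ^ (α - 1) - (t₁ - τ) ^ (α - 1)) * q τ)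
              + ∫ τ in t₁..t₂, (t₂ - τ) ^ (α - 1) * q τ|
            ≤ (1 / Real.Gamma α) * (M * ((t₂ - t₁) ^ α / α) + M * ((t₂ - t₁) ^ α / α)) := by
              apply mul_le_mul_of_nonneg_left _ (by positivity)
              exact (abs_add_le _ _).trans (add_le_add hAbound hBbound)
          _ = C * (t₂ - t₁) ^ α := by rw [hCeq]; ring
      · -- α > 1 case
        have hmin : min α 1 = 1 := min_eq_right hgt.le
        have hCeq : C = 3 * M * (b - a) ^ (α - 1) / Real.Gamma α := by
          rw [hCdef, if_neg (not_le.2 hgt)]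
        have hδB : (t₂ - t₁) ^ α ≤ (b - a) ^ (α - 1) * (t₂ - t₁) := by
          rcases eq_or_lt_of_le hδnn with h0 | h0
          · rw [← h0, Real.zero_rpow hαne]; simp
          · have hsplit : (t₂ - t₁) ^ α = (t₂ - t₁) ^ (α - 1) * (t₂ - t₁) := by
              have h := Real.rpow_add h0 (α - 1) 1
              rw [Real.rpow_one] at h
              rw [show (α : ℝ) - 1 + 1 = α from by ring] at h
              exact h
            rw [hsplit]
            exact mul_le_mul_of_nonneg_right
              (Real.rpow_le_rpow hδnn (by linarith) (by linarith)) hδnn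
        have hAbound : |∫ τ in a..t₁, ((t₂ - τ) ^ (α - 1) - (t₁ - τ) ^ (α - 1)) * q τ|
            ≤ 2 * M * ((b - a) ^ (α - 1) * (t₂ - t₁)) := by
          have hg : IntervalIntegrable
              (fun τ => M * ((t₂ - τ) ^ (α - 1) - (t₁ - τ) ^ (α - 1))) volume a t₁ :=
            ((rl_kernel_intable hα t₂ a t₁).sub (rl_kernel_intable hα t₁ a t₁)).const_mul M
          have hsub : Set.Ioc a t₁ ⊆ Set.Icc a b := fun x hx =>
            ⟨hx.1.le, le_trans hx.2 h1b⟩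
          have hae : ∀ᵐ τ ∂(volume.restrict (Set.uIoc a t₁)),
              ‖((t₂ - τ) ^ (α - 1) - (t₁ - τ) ^ (α - 1)) * q τ‖
                ≤ M * ((t₂ - τ) ^ (α - 1) - (t₁ - τ) ^ (α - 1)) := by
            rw [Set.uIoc_of_le ha1]
            filter_upwards [ae_restrict_of_ae_restrict_of_subset hsub hM,
              ae_restrict_mem measurableSet_Ioc] with τ hqτ hτ
            have hK : (t₁ - τ) ^ (α - 1) ≤ (t₂ - τ) ^ (α - 1) :=
              Real.rpow_le_rpow (by linarith [hτ.2]) (by linarith) (by linarith)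
            rw [Real.norm_eq_abs, abs_mul, abs_of_nonneg (sub_nonneg.2 hK)]
            calc ((t₂ - τ) ^ (α - 1) - (t₁ - τ) ^ (α - 1)) * |q τ|
                ≤ ((t₂ - τ) ^ (α - 1) - (t₁ - τ) ^ (α - 1)) * M :=
                  mul_le_mul_of_nonneg_left hqτ (sub_nonneg.2 hK)
              _ = M * ((t₂ - τ) ^ (α - 1) - (t₁ - τ) ^ (α - 1)) := by ring
          have h := intervalIntegral.norm_integral_le_abs_of_norm_le hae hg
          have hval : ∫ τ in a..t₁, M * ((t₂ - τ) ^ (α - 1) - (t₁ - τ) ^ (α - 1))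
              = M * ((((t₂ - a) ^ α - (t₂ - t₁) ^ α) / α)
                - (((t₁ - a) ^ α - (t₁ - t₁) ^ α) / α)) := by
            rw [intervalIntegral.integral_const_mul,
              intervalIntegral.integral_sub (rl_kernel_intable hα t₂ a t₁)
                (rl_kernel_intable hα t₁ a t₁),
              rl_kernel_integral hα a t₁ t₂, rl_kernel_integral hα a t₁ t₁]
          rw [hval, sub_self, Real.zero_rpow hαne, sub_zero, Real.norm_eq_abs] at h
          have hdiff : (t₂ - a) ^ α - (t₁ - a) ^ α ≤ α * ((b - a) ^ (α - 1) * (t₂ - t₁)) := by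
            have := rl_rpow_sub_rpow_le (B := b - a) (x := t₂ - a) (y := t₁ - a)
              hgt.le (by linarith) (by linarith) (by linarith)
            calc (t₂ - a) ^ α - (t₁ - a) ^ α ≤ α * (b - a) ^ (α - 1) * ((t₂ - a) - (t₁ - a)) :=
                this
              _ = α * ((b - a) ^ (α - 1) * (t₂ - t₁)) := by ring
          have hmono : (t₁ - a) ^ α ≤ (t₂ - a) ^ α :=
            Real.rpow_le_rpow (by linarith) (by linarith) hα.le
          have hδαnn : (0:ℝ) ≤ (t₂ - t₁) ^ α := Real.rpow_nonneg hδnn _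
          have hE : (0:ℝ) ≤ (b - a) ^ (α - 1) * (t₂ - t₁) := mul_nonneg hB0nn hδnn
          have habs : |M * (((t₂ - a) ^ α - (t₂ - t₁) ^ α) / α - (t₁ - a) ^ α / α)|
              ≤ 2 * M * ((b - a) ^ (α - 1) * (t₂ - t₁)) := by
            rw [abs_mul, abs_of_nonneg hMnn]
            have h1 : |((t₂ - a) ^ α - (t₂ - t₁) ^ α) / α - (t₁ - a) ^ α / α|
                ≤ 2 * ((b - a) ^ (α - 1) * (t₂ - t₁)) := by
              rw [show ((t₂ - a) ^ α - (t₂ - t₁) ^ α) / α - (t₁ - a) ^ α / α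
                  = ((t₂ - a) ^ α - (t₂ - t₁) ^ α - (t₁ - a) ^ α) / α from by ring, abs_le]
              constructor
              · rw [le_div_iff₀ hα]
                nlinarith [mul_nonneg hE (by linarith : (0:ℝ) ≤ α - 1)]
              · rw [div_le_iff₀ hα]
                nlinarith [mul_nonneg hE hα.le, hδαnn]
            calc M * |((t₂ - a) ^ α - (t₂ - t₁) ^ α) / α - (t₁ - a) ^ α / α|
                ≤ M * (2 * ((b - a) ^ (α - 1) * (t₂ - t₁))) :=
                  mul_le_mul_of_nonneg_left h1 hMnn
              _ = 2 * M * ((b - a) ^ (α - 1) * (t₂ - t₁)) := by ring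
          exact h.trans habs
        -- combine
        have hBbound2 : |∫ τ in t₁..t₂, (t₂ - τ) ^ (α - 1) * q τ|
            ≤ M * ((b - a) ^ (α - 1) * (t₂ - t₁)) := by
          refine hBbound.trans ?_
          apply mul_le_mul_of_nonneg_left _ hMnn
          calc (t₂ - t₁) ^ α / α ≤ (t₂ - t₁) ^ α := by
                rw [div_le_iff₀ (by linarith : (0:ℝ) < α)]
                nlinarith [Real.rpow_nonneg hδnn α]
            _ ≤ (b - a) ^ (α - 1) * (t₂ - t₁) := hδB
        rw [hdecomp, hmin, Real.rpow_one, abs_mul,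
          abs_of_pos (by positivity : (0:ℝ) < 1 / Real.Gamma α)]
        calc (1 / Real.Gamma α) * |(∫ τ in a..t₁, ((t₂ - τ) ^ (α - 1) - (t₁ - τ) ^ (α - 1)) * q τ)
              + ∫ τ in t₁..t₂, (t₂ - τ) ^ (α - 1) * q τ|
            ≤ (1 / Real.Gamma α) * (2 * M * ((b - a) ^ (α - 1) * (t₂ - t₁))
              + M * ((b - a) ^ (α - 1) * (t₂ - t₁))) := by
              apply mul_le_mul_of_nonneg_left _ (by positivity)
              exact (abs_add_le _ _).trans (add_le_add hAbound hBbound2)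
          _ = C * (t₂ - t₁) := by rw [hCeq]; ring
    intro t₁ ht₁ t₂ ht₂
    rcases le_total t₁ t₂ with h | h
    · rw [abs_of_nonneg (sub_nonneg.2 h)]
      exact key t₁ t₂ ht₁ ht₂ h
    · rw [abs_sub_comm (rlInt a α q t₂), abs_sub_comm t₂ t₁,
        abs_of_nonneg (sub_nonneg.2 h)]
      exact key t₂ t₁ ht₂ ht₁ h
  · simp [rlInt, if_neg hαne]
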